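/- Let n ≥ 1, equip ℝ^{n+1} with the Lorentzian inner product x ∘ y = −x₀y₀ + x₁y₁ + ⋯ + x_ny_n, let Hⁿ = {x : x ∘ x = −1, x₀ > 0}, and let d_H(x,y) = arccosh(−x ∘ y). Let a < b be real numbers and α : [a,b] → Hⁿ a map. Then the following are equivalent: (1) α is a geodesic curve, i.e. d_H(α(s), α(t)) = |s − t| for all s, t ∈ [a,b]; (2) there exist Lorentz orthonormal vectors x, y ∈ ℝ^{n+1} (meaning x ∘ x = −1, x ∘ y = 0, y ∘ y = 1) with x₀ > 0 such that α(t) = cosh(t − a)·x + sinh(t − a)·y for all t ∈ [a,b]. -/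
import Mathlib

/-- The Lorentzian inner product `x ∘ y = -x₀y₀ + x₁y₁ + ⋯`. -/
noncomputable def lorentzInner {m : ℕ} [NeZero m] (x y : Fin m → ℝ) : ℝ :=
  (∑ i, x i * y i) - 2 * (x 0 * y 0)

/-- The hyperboloid model `Hⁿ ⊆ ℝ^{n+1}`. -/
def hyperboloid (n : ℕ) : Set (Fin (n + 1) → ℝ) :=
  {x | lorentzInner x x = -1 ∧ 0 < x 0}

/-- The inverse hyperbolic cosine. -/
noncomputable def arcosh (x : ℝ) : ℝ := Real.log (x + Real.sqrt (x ^ 2 - 1))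

/-- The hyperbolic distance on the hyperboloid model. -/
noncomputable def dH {n : ℕ} (x y : Fin (n + 1) → ℝ) : ℝ :=
  arcosh (-lorentzInner x y)

/-- spatial part of the Lorentz inner product -/
noncomputable def spPart {m : ℕ} [NeZero m] (x y : Fin m → ℝ) : ℝ :=
  ∑ i ∈ Finset.univ.erase 0, x i * y i

lemma li_eq_sp {m : ℕ} [NeZero m] (x y : Fin m → ℝ) :
    lorentzInner x y = spPart x y - x 0 * y 0 := by
  unfold lorentzInner spPart
  rw [← Finset.sum_erase_add _ _ (Finset.mem_univ (0 : Fin m))]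
  ring

lemma spPart_nonneg {m : ℕ} [NeZero m] (x : Fin m → ℝ) : 0 ≤ spPart x x :=
  Finset.sum_nonneg fun i _ => mul_self_nonneg _

lemma spPart_cs {m : ℕ} [NeZero m] (x y : Fin m → ℝ) :
    (spPart x y) ^ 2 ≤ spPart x x * spPart y y := by
  have h := Finset.sum_mul_sq_le_sq_mul_sq (Finset.univ.erase (0 : Fin m)) x y
  simpa [spPart, sq] using h

lemma li_expand {m : ℕ} [NeZero m] (c₁ d₁ c₂ d₂ : ℝ) (x y u v : Fin m → ℝ) :
    lorentzInner (fun i => c₁ * x i + d₁ * y i) (fun i => c₂ * u i + d₂ * v i) =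
    c₁*c₂*lorentzInner x u + c₁*d₂*lorentzInner x v + d₁*c₂*lorentzInner y u
      + d₁*d₂*lorentzInner y v := by
  have h : ∀ i, (c₁ * x i + d₁ * y i) * (c₂ * u i + d₂ * v i) =
      c₁*c₂*(x i*u i) + c₁*d₂*(x i*v i) + d₁*c₂*(y i*u i) + d₁*d₂*(y i*v i) :=
    fun i => by ring
  simp only [lorentzInner, h, Finset.sum_add_distrib, ← Finset.mul_sum]
  ring

lemma li_right_comb {m : ℕ} [NeZero m] (c d : ℝ) (x u v : Fin m → ℝ) :
    lorentzInner x (fun i => c * u i + d * v i) =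
    c * lorentzInner x u + d * lorentzInner x v := by
  have h : ∀ i, x i * (c * u i + d * v i) = c * (x i * u i) + d * (x i * v i) :=
    fun i => by ring
  simp only [lorentzInner, h, Finset.sum_add_distrib, ← Finset.mul_sum]
  ring

lemma li_smul_right {m : ℕ} [NeZero m] (c : ℝ) (x y : Fin m → ℝ) :
    lorentzInner x (fun i => c * y i) = c * lorentzInner x y := by
  have h : ∀ i, x i * (c * y i) = c * (x i * y i) := fun i => by ring
  simp only [lorentzInner, h, ← Finset.mul_sum]
  ring

lemma li_smul_left {m : ℕ} [NeZero m] (c : ℝ) (x y : Fin m → ℝ) :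
    lorentzInner (fun i => c * x i) y = c * lorentzInner x y := by
  have h : ∀ i, (c * x i) * y i = c * (x i * y i) := fun i => by ring
  simp only [lorentzInner, h, ← Finset.mul_sum]
  ring

lemma li_comm {m : ℕ} [NeZero m] (x y : Fin m → ℝ) :
    lorentzInner x y = lorentzInner y x := by
  unfold lorentzInner
  rw [Finset.sum_congr rfl (fun i _ => mul_comm (x i) (y i))]
  ring

lemma cosh_arcosh {z : ℝ} (hz : 1 ≤ z) : Real.cosh (arcosh z) = z := by
  have h1 : (0:ℝ) ≤ z ^ 2 - 1 := by nlinarith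
  have hs := Real.sq_sqrt h1
  have hs0 := Real.sqrt_nonneg (z ^ 2 - 1)
  set s := Real.sqrt (z ^ 2 - 1) with hsdef
  have hu : 0 < z + s := by nlinarith
  have hinv : (z + s)⁻¹ = z - s := by
    rw [inv_eq_iff_eq_inv, eq_comm, inv_eq_iff_eq_inv]
    · field_simp
      nlinarith
  rw [arcosh, ← hsdef, Real.cosh_eq, Real.exp_log hu, Real.exp_neg, Real.exp_log hu, hinv]
  ring

lemma arcosh_cosh (r : ℝ) : arcosh (Real.cosh r) = |r| := by
  have h1 : Real.cosh r ^ 2 - 1 = Real.sinh r ^ 2 := by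
    have := Real.cosh_sq_sub_sinh_sq r; nlinarith
  rw [arcosh, h1, Real.sqrt_sq_eq_abs]
  have : Real.cosh r + |Real.sinh r| = Real.exp |r| := by
    rcases abs_cases r with ⟨h, h0⟩ | ⟨h, h0⟩
    · rw [abs_of_nonneg (Real.sinh_nonneg_iff.2 h0), h, Real.cosh_add_sinh]
    · rw [abs_of_nonpos (Real.sinh_nonpos_iff.2 (le_of_lt h0)), h, ← Real.cosh_neg r,
        ← Real.sinh_neg r, Real.cosh_add_sinh]
  rw [this, Real.log_exp]

/-- Two hyperboloid points have `-x∘y ≥ 1`. -/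
lemma neg_li_ge_one {m : ℕ} [NeZero m] {x y : Fin m → ℝ}
    (hx : lorentzInner x x = -1) (hx0 : 0 < x 0)
    (hy : lorentzInner y y = -1) (hy0 : 0 < y 0) :
    1 ≤ -lorentzInner x y := by
  have hxs : spPart x x = x 0 * x 0 - 1 := by have := li_eq_sp x x; linarith
  have hys : spPart y y = y 0 * y 0 - 1 := by have := li_eq_sp y y; linarith
  have hx1 : 1 ≤ x 0 := by nlinarith [spPart_nonneg x]
  have hy1 : 1 ≤ y 0 := by nlinarith [spPart_nonneg y]
  have hcs := spPart_cs x y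
  rw [hxs, hys] at hcs
  have hA : 0 ≤ x 0 * y 0 - 1 := by nlinarith
  have h2 : (spPart x y) ^ 2 ≤ (x 0 * y 0 - 1) ^ 2 := by nlinarith [sq_nonneg (x 0 - y 0)]
  have h3 : spPart x y ≤ x 0 * y 0 - 1 := by nlinarith
  rw [li_eq_sp]
  linarith

/-- Positivity on the Lorentz complement of a timelike vector. -/
lemma ortho_zero {m : ℕ} [NeZero m] {x v : Fin m → ℝ}
    (hx : lorentzInner x x = -1) (hxv : lorentzInner x v = 0)
    (hvv : lorentzInner v v = 0) : ∀ i, v i = 0 := by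
  have hxs : spPart x x = x 0 * x 0 - 1 := by have := li_eq_sp x x; linarith
  have hxvs : spPart x v = x 0 * v 0 := by have := li_eq_sp x v; linarith
  have hvs : spPart v v = v 0 * v 0 := by have := li_eq_sp v v; linarith
  have hcs := spPart_cs x v
  rw [hxs, hxvs, hvs] at hcs
  have hv0 : v 0 = 0 := by nlinarith
  have hvs0 : ∑ i ∈ Finset.univ.erase (0 : Fin m), v i * v i = 0 := by
    have : spPart v v = 0 := by rw [hvs, hv0]; ring
    simpa [spPart] using this
  rw [Finset.sum_eq_zero_iff_of_nonneg (fun i _ => mul_self_nonneg (v i))] at hvs0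
  intro i
  by_cases hi : i = 0
  · rw [hi]; exact hv0
  · exact mul_self_eq_zero.mp (hvs0 i (Finset.mem_erase.2 ⟨hi, Finset.mem_univ i⟩))

theorem geodesic_curve_characterisation (n : ℕ) (hn : 1 ≤ n) (a b : ℝ) (hab : a < b)
    (α : ℝ → Fin (n + 1) → ℝ) (hα : ∀ t ∈ Set.Icc a b, α t ∈ hyperboloid n) :
    (∀ s ∈ Set.Icc a b, ∀ t ∈ Set.Icc a b, dH (α s) (α t) = |s - t|) ↔
    (∃ x y : Fin (n + 1) → ℝ,
      lorentzInner x x = -1 ∧ lorentzInner x y = 0 ∧ lorentzInner y y = 1 ∧ 0 < x 0 ∧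
      ∀ t ∈ Set.Icc a b,
        α t = fun i => Real.cosh (t - a) * x i + Real.sinh (t - a) * y i) := by
  have ha : a ∈ Set.Icc a b := Set.left_mem_Icc.2 hab.le
  have hb : b ∈ Set.Icc a b := Set.right_mem_Icc.2 hab.le
  constructor
  · intro H
    have key : ∀ s ∈ Set.Icc a b, ∀ t ∈ Set.Icc a b,
        lorentzInner (α s) (α t) = -Real.cosh (s - t) := by
      intro s hs t ht
      have h1 := neg_li_ge_one (hα s hs).1 (hα s hs).2 (hα t ht).1 (hα t ht).2
      have h2 := H s hs t ht
      have h3 : Real.cosh (dH (α s) (α t)) = Real.cosh |s - t| := by rw [h2]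
      rw [dH, cosh_arcosh h1, Real.cosh_abs] at h3
      linarith
    set w : ℝ → Fin (n + 1) → ℝ :=
      fun t i => 1 * α t i + (-Real.cosh (t - a)) * α a i with hw
    have hww : ∀ s ∈ Set.Icc a b, ∀ t ∈ Set.Icc a b,
        lorentzInner (w s) (w t) = Real.sinh (s - a) * Real.sinh (t - a) := by
      intro s hs t ht
      rw [hw, li_expand, key s hs t ht, key s hs a ha, key a ha t ht, key a ha a ha]
      have h0 : Real.cosh (s - t) =
          Real.cosh (s - a) * Real.cosh (t - a) - Real.sinh (s - a) * Real.sinh (t - a) := by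
        have h := Real.cosh_sub (s - a) (t - a)
        rw [show (s - a) - (t - a) = s - t from by ring] at h
        exact h
      have h1 : Real.cosh (a - t) = Real.cosh (t - a) := by
        rw [show a - t = -(t - a) from by ring, Real.cosh_neg]
      have h2 : Real.cosh (a - a) = 1 := by norm_num
      rw [h0, h1, h2]
      ring
    have hxw : ∀ t ∈ Set.Icc a b, lorentzInner (α a) (w t) = 0 := by
      intro t ht
      rw [hw]
      rw [show lorentzInner (α a) (fun i => 1 * α t i + -Real.cosh (t - a) * α a i)
          = 1 * lorentzInner (α a) (α t) + (-Real.cosh (t - a)) * lorentzInner (α a) (α a)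
          from li_right_comb 1 (-Real.cosh (t - a)) (α a) (α t) (α a)]
      rw [key a ha t ht, key a ha a ha]
      have h1 : Real.cosh (a - t) = Real.cosh (t - a) := by
        rw [show a - t = -(t - a) from by ring, Real.cosh_neg]
      have h2 : Real.cosh (a - a) = 1 := by norm_num
      rw [h1, h2]
      ring
    have hsb : 0 < Real.sinh (b - a) := Real.sinh_pos_iff.2 (by linarith)
    have hsb' : Real.sinh (b - a) ≠ 0 := ne_of_gt hsb
    refine ⟨α a, fun i => (Real.sinh (b - a))⁻¹ * w b i, (hα a ha).1, ?_, ?_, (hα a ha).2, ?_⟩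
    · rw [li_smul_right, hxw b hb, mul_zero]
    · rw [li_smul_left, li_smul_right, hww b hb b hb]
      field_simp
    · intro t ht
      have hv : ∀ i, (Real.sinh (t - a)) * w b i + (-Real.sinh (b - a)) * w t i = 0 := by
        apply ortho_zero (x := α a) (hα a ha).1
        · rw [li_right_comb, hxw b hb, hxw t ht]; ring
        · rw [li_expand, hww b hb b hb, hww b hb t ht, hww t ht b hb, hww t ht t ht]
          ring
      funext i
      have h := hv i
      simp only [hw] at h
      have goal : α t i = Real.cosh (t - a) * α a i +
          Real.sinh (t - a) * ((Real.sinh (b - a))⁻¹ * w b i) := by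
        simp only [hw]
        field_simp
        linarith
      exact goal
  · rintro ⟨x, y, hxx, hxy, hyy, hx0, hform⟩ s hs t ht
    rw [hform s hs, hform t ht, dH, li_expand, hxx, hyy, li_comm y x, hxy]
    have h0 : Real.cosh (s - t) =
        Real.cosh (s - a) * Real.cosh (t - a) - Real.sinh (s - a) * Real.sinh (t - a) := by
      have h := Real.cosh_sub (s - a) (t - a)
      rw [show (s - a) - (t - a) = s - t from by ring] at h
      exact h
    rw [show -(Real.cosh (s - a) * Real.cosh (t - a) * -1 +
        Real.cosh (s - a) * Real.sinh (t - a) * 0 +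
        Real.sinh (s - a) * Real.cosh (t - a) * 0 +
        Real.sinh (s - a) * Real.sinh (t - a) * 1) = Real.cosh (s - t) from by
      rw [h0]; ring]
    exact arcosh_cosh (s - t)
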